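/- Let q_w ≥ 1, q_p ≥ 0 and n ≥ 0 be natural numbers. The real vector space of functions f : [0, n+1] → ℝ that are (q_w − 1)-times continuously differentiable on [0, n+1] and agree with a polynomial of degree ≤ q_w + q_p on each interval [j, j+1] for j = 0, …, n has dimension (q_w + q_p + 1) + n·(q_p + 1). -/

import Mathlib

open Polynomial Set

namespace SplineAux

/-- Truncated power function. -/
noncomputable def tp (a : ℝ) (k : ℕ) (x : ℝ) : ℝ := max (x - a) 0 ^ k

lemma hasDerivAt_maxpow (k : ℕ) (hk : 1 ≤ k) (x : ℝ) :
    HasDerivAt (fun y : ℝ => max y 0 ^ (k + 1)) ((k + 1) * max x 0 ^ k) x := by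
  rcases lt_trichotomy x 0 with hx | hx | hx
  · have hev : (fun _ : ℝ => (0 : ℝ)) =ᶠ[nhds x] fun y : ℝ => max y 0 ^ (k + 1) := by
      filter_upwards [Iio_mem_nhds hx] with y hy
      have : y < 0 := hy
      simp [max_eq_right this.le, zero_pow]
    have h2 := (hasDerivAt_const x (0 : ℝ)).congr_of_eventuallyEq hev.symm
    have h3 : ((k : ℝ) + 1) * max x 0 ^ k = 0 := by
      rw [max_eq_right hx.le, zero_pow (by omega : k ≠ 0), mul_zero]
    rw [h3]; exact h2
  · subst hx
    have h0 : ((k : ℝ) + 1) * max 0 0 ^ k = 0 := by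
      rw [max_self, zero_pow (by omega : k ≠ 0), mul_zero]
    rw [h0, hasDerivAt_iff_isLittleO]
    rw [Asymptotics.isLittleO_iff]
    intro c hc
    have hmem : Set.Ioo (-(min c 1)) (min c 1) ∈ nhds (0 : ℝ) :=
      Ioo_mem_nhds (by simp only [Left.neg_neg_iff, lt_min_iff]; constructor <;> linarith)
        (by simp only [lt_min_iff]; constructor <;> linarith)
    filter_upwards [hmem] with y hy
    simp only [sub_zero, smul_zero, sub_zero, max_self]
    rw [show ((0:ℝ)) ^ (k + 1) = 0 from zero_pow (by omega), sub_zero]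
    rcases le_or_gt y 0 with h | h
    · rw [max_eq_right h, zero_pow (by omega : k + 1 ≠ 0), norm_zero]
      positivity
    · rw [max_eq_left h.le, Real.norm_eq_abs, Real.norm_eq_abs,
        abs_of_pos (pow_pos h _), abs_of_pos h]
      have hy1 : y ≤ 1 := le_of_lt (lt_of_lt_of_le hy.2 (min_le_right _ _))
      have hyc : y ≤ c := le_of_lt (lt_of_lt_of_le hy.2 (min_le_left _ _))
      have hk1 : y ^ k ≤ c := le_trans (pow_le_of_le_one h.le hy1 (by omega)) hyc
      calc y ^ (k + 1) = y ^ k * y := by ring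
        _ ≤ c * y := mul_le_mul_of_nonneg_right hk1 h.le
  · have hev : (fun y : ℝ => y ^ (k + 1)) =ᶠ[nhds x] fun y : ℝ => max y 0 ^ (k + 1) := by
      filter_upwards [Ioi_mem_nhds hx] with y hy
      simp [max_eq_left (le_of_lt (show (0:ℝ) < y from hy))]
    have := (hasDerivAt_pow (k + 1) x).congr_of_eventuallyEq hev.symm
    simpa [max_eq_left hx.le, Nat.add_sub_cancel, mul_comm] using this

lemma contDiff_maxpow (k : ℕ) : ContDiff ℝ (k : ℕ) (fun x : ℝ => max x 0 ^ (k + 1)) := by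
  induction k with
  | zero =>
    rw [show ((0 : ℕ) : WithTop ℕ∞) = 0 from rfl, contDiff_zero]
    simpa using ((continuous_id : Continuous (id : ℝ → ℝ)).max (continuous_const : Continuous fun _ : ℝ => (0:ℝ))).pow 1
  | succ k IH =>
    rw [show ((k + 1 : ℕ) : WithTop ℕ∞) = (k : ℕ) + 1 by push_cast; rfl,
      contDiff_succ_iff_deriv]
    refine ⟨fun x => (hasDerivAt_maxpow (k + 1) (by omega) x).differentiableAt, by simp, ?_⟩
    have hderiv : deriv (fun y : ℝ => max y 0 ^ (k + 1 + 1)) =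
        fun x => ((k : ℝ) + 1 + 1) * max x 0 ^ (k + 1) := by
      funext x
      have := (hasDerivAt_maxpow (k + 1) (by omega) x).deriv
      rw [this]; push_cast; ring
    rw [hderiv]
    have := ContDiff.const_smul ((k : ℝ) + 1 + 1) IH
    simpa [smul_eq_mul] using this


lemma contDiff_tp (a : ℝ) (k : ℕ) (hk : 1 ≤ k) :
    ContDiff ℝ ((k - 1 : ℕ)) (tp a k) := by
  obtain ⟨m, rfl⟩ : ∃ m, k = m + 1 := ⟨k - 1, by omega⟩
  have h1 : ContDiff ℝ (m : ℕ) (fun x : ℝ => max x 0 ^ (m + 1)) := contDiff_maxpow m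
  have h2 : ContDiff ℝ (m : ℕ) (fun x : ℝ => x - a) :=
    (contDiff_id.sub contDiff_const)
  have h3 : ContDiff ℝ (m : ℕ) (tp a (m + 1)) := h1.comp h2
  simpa [Nat.add_sub_cancel] using h3

/-- iterated derivatives within a smaller unique-diff set agree with those on a bigger one. -/
lemma iteratedDerivWithin_subset_eqOn {f : ℝ → ℝ} {s t : Set ℝ} {N : ℕ} (hst : s ⊆ t)
    (hs : UniqueDiffOn ℝ s) (ht : UniqueDiffOn ℝ t) (hf : ContDiffOn ℝ N f t) :
    ∀ i ≤ N, Set.EqOn (iteratedDerivWithin i f s) (iteratedDerivWithin i f t) s := by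
  intro i hi
  induction i with
  | zero => intro x _; simp [iteratedDerivWithin_zero]
  | succ i IH =>
    intro x hx
    rw [iteratedDerivWithin_succ,
      iteratedDerivWithin_succ]
    have hEq := IH (by omega)
    rw [derivWithin_congr hEq (hEq hx)]
    exact derivWithin_subset hst (hs.uniqueDiffWithinAt hx)
      (hf.differentiableOn_iteratedDerivWithin (by exact_mod_cast Nat.lt_of_succ_le hi) ht x
        (hst hx))

lemma iteratedDerivWithin_poly (p : Polynomial ℝ) {s : Set ℝ} (hs : UniqueDiffOn ℝ s) (i : ℕ) :
    Set.EqOn (iteratedDerivWithin i (fun x => p.eval x) s)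
      (fun x => (derivative^[i] p).eval x) s := by
  induction i generalizing p with
  | zero => intro x _; simp [iteratedDerivWithin_zero]
  | succ i IH =>
    intro x hx
    rw [iteratedDerivWithin_succ']
    have h1 : Set.EqOn (derivWithin (fun x => p.eval x) s)
        (fun x => p.derivative.eval x) s := fun y hy =>
      Polynomial.derivWithin (p := p) (hs.uniqueDiffWithinAt hy)
    calc iteratedDerivWithin i (derivWithin (fun x => p.eval x) s) s x
        = iteratedDerivWithin i (fun x => p.derivative.eval x) s x :=
          iteratedDerivWithin_congr h1 hx
      _ = (derivative^[i] p.derivative).eval x := IH p.derivative hx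
      _ = (derivative^[i + 1] p).eval x := by rw [Function.iterate_succ_apply]

lemma poly_eq_zero_of_Icc {p : Polynomial ℝ} {a b : ℝ} (hab : a < b)
    (h : ∀ x ∈ Set.Icc a b, p.eval x = 0) : p = 0 := by
  apply Polynomial.eq_zero_of_infinite_isRoot
  apply Set.Infinite.mono (s := Set.Icc a b) (fun x hx => h x hx)
  exact Set.Icc_infinite hab

/-- Taylor coefficient vanishing from iterated derivative vanishing. -/
lemma taylor_coeff_zero_of_iteratedDeriv {q : Polynomial ℝ} {c : ℝ} {i : ℕ}
    (h : (derivative^[i] q).eval c = 0) : ((Polynomial.taylor c q).coeff i) = 0 := by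
  rw [Polynomial.taylor_coeff]
  have hf := congrFun (Polynomial.factorial_smul_hasseDeriv (R := ℝ) i) q
  have h2 := congrArg (Polynomial.eval c) hf
  rw [h] at h2
  rw [LinearMap.smul_apply, Polynomial.eval_smul, smul_eq_zero] at h2
  have hfac : ((Nat.factorial i : ℝ)) ≠ 0 := by
    exact_mod_cast (Nat.factorial_pos i).ne'
  rcases h2 with h' | h'
  · exact absurd (by exact_mod_cast h' : (Nat.factorial i : ℝ) = 0) hfac
  · exact h'

/-- Taylor expansion of a polynomial whose low Taylor coefficients at `a` vanish. -/
lemma eval_eq_truncated_sum {q : Polynomial ℝ} {a : ℝ} {q_w q_p : ℕ}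
    (hdeg : q.natDegree ≤ q_w + q_p)
    (hlow : ∀ i < q_w, (Polynomial.taylor a q).coeff i = 0) (x : ℝ) :
    q.eval x = ∑ k ∈ Finset.range (q_p + 1),
      (Polynomial.taylor a q).coeff (q_w + k) * (x - a) ^ (q_w + k) := by
  conv_lhs => rw [← Polynomial.sum_taylor_eq q a]
  rw [Polynomial.sum_def, Polynomial.eval_finset_sum]
  simp only [Polynomial.eval_mul, Polynomial.eval_pow, Polynomial.eval_C, Polynomial.eval_sub,
    Polynomial.eval_X]
  have hsupp : (Polynomial.taylor a q).support ⊆ Finset.range (q_w + (q_p + 1)) :=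
    Polynomial.supp_subset_range (by rw [Polynomial.natDegree_taylor]; omega)
  rw [Finset.sum_subset hsupp]
  · rw [Finset.sum_range_add]
    have h0 : ∑ i ∈ Finset.range q_w,
        (Polynomial.taylor a q).coeff i * (x - a) ^ i = 0 := by
      apply Finset.sum_eq_zero
      intro i hi
      rw [hlow i (Finset.mem_range.mp hi), zero_mul]
    rw [h0, zero_add]
  · intro i _ hi
    rw [Polynomial.notMem_support_iff.mp hi, zero_mul]


lemma iteratedDerivWithin_eq_poly {f : ℝ → ℝ} {N : ℕ} {T : Set ℝ} (hT : UniqueDiffOn ℝ T)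
    (hf : ContDiffOn ℝ N f T) {a b : ℝ} (hab : a < b) (hsub : Set.Icc a b ⊆ T)
    {p : Polynomial ℝ} (hp : ∀ x ∈ Set.Icc a b, f x = p.eval x)
    {x : ℝ} (hx : x ∈ Set.Icc a b) {i : ℕ} (hi : i ≤ N) :
    iteratedDerivWithin i f T x = (derivative^[i] p).eval x := by
  have hs : UniqueDiffOn ℝ (Set.Icc a b) := uniqueDiffOn_Icc hab
  rw [← iteratedDerivWithin_subset_eqOn hsub hs hT hf i hi hx,
    iteratedDerivWithin_congr (fun y hy => hp y hy) hx]
  exact iteratedDerivWithin_poly p hs i hx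

end SplineAux

/-- The spline space `S^{q_w+q_p, q_w-1}` on `[0, n+1]` with inner knots `1, …, n`,
realised as a submodule of the functions on `[0, n+1]` admitting an extension that is
`C^{q_w-1}` on `[0, n+1]` and agrees with a polynomial of degree `≤ q_w + q_p` on each
interval `[j, j+1]`, `j = 0, …, n`, has dimension `(q_w + q_p + 1) + n·(q_p + 1)`. -/
theorem spline_space_dimension (q_w q_p n : ℕ) (hqw : 1 ≤ q_w)
    (S : Submodule ℝ (Set.Icc (0 : ℝ) ((n : ℝ) + 1) → ℝ))
    (hS : ∀ g : Set.Icc (0 : ℝ) ((n : ℝ) + 1) → ℝ,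
      g ∈ S ↔ ∃ f : ℝ → ℝ,
        ContDiffOn ℝ (q_w - 1 : ℕ) f (Set.Icc (0 : ℝ) ((n : ℝ) + 1)) ∧
        (∀ j : ℕ, j ≤ n → ∃ p : Polynomial ℝ, p.natDegree ≤ q_w + q_p ∧
          ∀ ξ ∈ Set.Icc (j : ℝ) ((j : ℝ) + 1), f ξ = p.eval ξ) ∧
        ∀ x : Set.Icc (0 : ℝ) ((n : ℝ) + 1), g x = f (x : ℝ)) :
    Module.finrank ℝ S = (q_w + q_p + 1) + n * (q_p + 1) := by
  classical
  have hTn : (0:ℝ) < (n:ℝ) + 1 := by positivity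
  have hTu : UniqueDiffOn ℝ (Set.Icc (0:ℝ) ((n:ℝ)+1)) := uniqueDiffOn_Icc hTn
  -- basis functions
  let B : (Fin (q_w+q_p+1) ⊕ Fin n × Fin (q_p+1)) → ℝ → ℝ :=
    Sum.elim (fun i x => x ^ (i : ℕ))
      (fun jk x => SplineAux.tp (((jk.1 : ℕ) : ℝ) + 1) (q_w + (jk.2 : ℕ)) x)
  have hBinl : ∀ (i : Fin (q_w+q_p+1)) (x : ℝ), B (Sum.inl i) x = x ^ (i : ℕ) :=
    fun _ _ => rfl
  have hBinr : ∀ (jk : Fin n × Fin (q_p+1)) (x : ℝ),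
      B (Sum.inr jk) x = SplineAux.tp (((jk.1 : ℕ) : ℝ) + 1) (q_w + (jk.2 : ℕ)) x :=
    fun _ _ => rfl
  -- membership of basis functions in S
  have hmem : ∀ i, (fun x : Set.Icc (0:ℝ) ((n:ℝ)+1) => B i (x : ℝ)) ∈ S := by
    intro i
    rw [hS]
    refine ⟨B i, ?_, ?_, fun x => rfl⟩
    · cases i with
      | inl i => exact (contDiff_id.pow _).contDiffOn
      | inr jk =>
        have h := SplineAux.contDiff_tp (((jk.1 : ℕ) : ℝ) + 1) (q_w + (jk.2 : ℕ))
          (by omega)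
        refine (h.of_le ?_).contDiffOn
        exact_mod_cast Nat.cast_le.mpr (by omega : q_w - 1 ≤ q_w + (jk.2 : ℕ) - 1)
    · intro j hj
      cases i with
      | inl i =>
        refine ⟨Polynomial.X ^ (i : ℕ), ?_, fun ξ _ => by simp [hBinl]⟩
        rw [Polynomial.natDegree_X_pow]
        omega
      | inr jk =>
        rcases le_or_gt ((jk.1 : ℕ) + 1) j with h | h
        · refine ⟨(Polynomial.X - Polynomial.C (((jk.1 : ℕ) : ℝ) + 1)) ^ (q_w + (jk.2 : ℕ)),
            ?_, ?_⟩
          · rw [Polynomial.natDegree_pow, Polynomial.natDegree_X_sub_C]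
            have := jk.2.2
            omega
          · intro ξ hξ
            have h1 : ((jk.1 : ℕ) : ℝ) + 1 ≤ ξ := by
              refine le_trans ?_ hξ.1
              exact_mod_cast h
            rw [hBinr]
            unfold SplineAux.tp
            rw [max_eq_left (by linarith : (0:ℝ) ≤ ξ - (((jk.1 : ℕ) : ℝ) + 1))]
            simp
        · refine ⟨0, by simp, ?_⟩
          intro ξ hξ
          have h1 : ξ ≤ ((jk.1 : ℕ) : ℝ) + 1 := by
            refine le_trans hξ.2 ?_
            have h2 : (j:ℝ) ≤ ((jk.1:ℕ):ℝ) := by exact_mod_cast by omega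
            linarith
          rw [hBinr]
          unfold SplineAux.tp
          rw [max_eq_right (by linarith : ξ - (((jk.1 : ℕ) : ℝ) + 1) ≤ 0)]
          rw [zero_pow (by omega), Polynomial.eval_zero]
  let b : (Fin (q_w+q_p+1) ⊕ Fin n × Fin (q_p+1)) → S := fun i => ⟨_, hmem i⟩
  -- coercion of sums
  have hcoe : ∀ (c : Fin (q_w+q_p+1) ⊕ Fin n × Fin (q_p+1) → ℝ)
      (x : Set.Icc (0:ℝ) ((n:ℝ)+1)),
      ((↑(∑ i, c i • b i) : Set.Icc (0:ℝ) ((n:ℝ)+1) → ℝ) x) = ∑ i, c i * B i (x : ℝ) := by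
    intro c x
    rw [AddSubmonoidClass.coe_finset_sum, Finset.sum_apply]
    refine Finset.sum_congr rfl fun i _ => ?_
    simp [b, smul_eq_mul]
  -- segment evaluation of the basis truncated powers
  have hsegB : ∀ (m : ℕ), ∀ x : ℝ, (m:ℝ) ≤ x → x ≤ (m:ℝ)+1 →
      ∀ (j : Fin n) (k : Fin (q_p+1)),
      B (Sum.inr (j, k)) x
        = if (j:ℕ)+1 ≤ m then (x - (((j:ℕ):ℝ)+1))^(q_w + (k:ℕ)) else 0 := by
    intro m x hx1 hx2 j k
    show SplineAux.tp (((j:ℕ):ℝ)+1) (q_w + (k:ℕ)) x = _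
    by_cases h : (j:ℕ)+1 ≤ m
    · rw [if_pos h]
      unfold SplineAux.tp
      have : ((j:ℕ):ℝ)+1 ≤ (m:ℝ) := by exact_mod_cast h
      rw [max_eq_left (by linarith)]
    · rw [if_neg h]
      unfold SplineAux.tp
      have : (m:ℝ) ≤ ((j:ℕ):ℝ) := by exact_mod_cast by omega
      rw [max_eq_right (by linarith), zero_pow (by omega)]
  -- linear independence
  have hli : LinearIndependent ℝ b := by
    rw [Fintype.linearIndependent_iff]
    intro c hc
    have hzero : ∀ x : ℝ, x ∈ Set.Icc (0:ℝ) ((n:ℝ)+1) → (∑ i, c i * B i x) = 0 := by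
      intro x hx
      have h1 := congrFun (congrArg (Subtype.val) hc) ⟨x, hx⟩
      rw [hcoe c ⟨x, hx⟩] at h1
      exact h1
    have hmono : ∀ i : Fin (q_w+q_p+1), c (Sum.inl i) = 0 := by
      set P : Polynomial ℝ := ∑ i : Fin (q_w+q_p+1),
        Polynomial.monomial (i:ℕ) (c (Sum.inl i)) with hP
      have hPeval : ∀ x ∈ Set.Icc (0:ℝ) 1, P.eval x = 0 := by
        intro x hx
        have hn0 : (0:ℝ) ≤ (n:ℝ) := Nat.cast_nonneg n
        have hx' : x ∈ Set.Icc (0:ℝ) ((n:ℝ)+1) := ⟨hx.1, le_trans hx.2 (by linarith)⟩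
        have h0 := hzero x hx'
        rw [Fintype.sum_sum_type] at h0
        have htr : ∀ jk : Fin n × Fin (q_p+1), c (Sum.inr jk) * B (Sum.inr jk) x = 0 := by
          intro jk
          rw [show (jk : Fin n × Fin (q_p+1)) = (jk.1, jk.2) from rfl,
            hsegB 0 x (by exact_mod_cast hx.1) (by
              have := hx.2
              push_cast
              linarith) jk.1 jk.2, if_neg (by omega), mul_zero]
        rw [Finset.sum_eq_zero (fun jk _ => htr jk), add_zero] at h0
        rw [hP, Polynomial.eval_finset_sum]
        simpa [Polynomial.eval_monomial, hBinl] using h0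
      have hP0 : P = 0 := SplineAux.poly_eq_zero_of_Icc one_pos hPeval
      intro i
      have hco : P.coeff (i:ℕ) = c (Sum.inl i) := by
        rw [hP, Polynomial.finset_sum_coeff, Finset.sum_eq_single i]
        · simp [Polynomial.coeff_monomial]
        · intro i' _ hne
          rw [Polynomial.coeff_monomial, if_neg (fun h => hne (Fin.ext h))]
        · simp
      rw [hP0, Polynomial.coeff_zero] at hco
      exact hco.symm
    have hknot : ∀ j : ℕ, ∀ hj : j < n, ∀ k : Fin (q_p+1),
        c (Sum.inr (⟨j, hj⟩, k)) = 0 := by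
      intro j
      induction j using Nat.strong_induction_on with
      | _ j IH =>
        intro hj k
        set Q : Polynomial ℝ := ∑ k' : Fin (q_p+1),
          Polynomial.monomial (q_w + (k':ℕ)) (c (Sum.inr (⟨j, hj⟩, k'))) with hQ
        have hQeval : ∀ y ∈ Set.Icc (0:ℝ) 1, Q.eval y = 0 := by
          intro y hy
          set x : ℝ := y + ((j:ℝ) + 1) with hxdef
          have hj0 : (0:ℝ) ≤ (j:ℝ) := Nat.cast_nonneg j
          have hx1 : ((j+1 : ℕ):ℝ) ≤ x := by push_cast; linarith [hy.1]
          have hx2 : x ≤ ((j+1 : ℕ):ℝ) + 1 := by push_cast; linarith [hy.2]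
          have hjn : ((j+1:ℕ):ℝ) ≤ (n:ℝ) := by exact_mod_cast hj
          have hx' : x ∈ Set.Icc (0:ℝ) ((n:ℝ)+1) := by
            constructor
            · push_cast at hx1 ⊢
              linarith
            · push_cast at hx2 hjn ⊢
              linarith
          have h0 := hzero x hx'
          rw [Fintype.sum_sum_type] at h0
          rw [Finset.sum_eq_zero (fun i (_ : i ∈ Finset.univ) => by
            rw [hmono i, zero_mul]), zero_add] at h0
          rw [Fintype.sum_prod_type] at h0
          rw [Finset.sum_eq_single (⟨j, hj⟩ : Fin n)] at h0
          · rw [hQ, Polynomial.eval_finset_sum, ← h0]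
            refine Finset.sum_congr rfl fun k' _ => ?_
            rw [hsegB (j+1) x (by exact_mod_cast hx1) (by exact_mod_cast hx2) ⟨j, hj⟩ k']
            rw [if_pos (by simp)]
            rw [Polynomial.eval_monomial]
            have hxy : x - ((((⟨j, hj⟩ : Fin n) :ℕ):ℝ) + 1) = y := by
              simp only [Fin.val_mk]
              rw [hxdef]
              ring
            rw [hxy]
          · intro j' _ hne
            rcases lt_or_gt_of_ne (fun h : (j':ℕ) = j => hne (Fin.ext h)) with hlt | hgt
            · refine Finset.sum_eq_zero fun k' _ => ?_
              have h5 := IH (j':ℕ) hlt j'.2 k'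
              rw [Fin.eta] at h5
              rw [h5, zero_mul]
            · refine Finset.sum_eq_zero fun k' _ => ?_
              rw [hsegB (j+1) x (by exact_mod_cast hx1) (by exact_mod_cast hx2) j' k',
                if_neg (by omega), mul_zero]
          · intro habs
            exact absurd (Finset.mem_univ _) habs
        have hQ0 : Q = 0 := SplineAux.poly_eq_zero_of_Icc one_pos hQeval
        have hco : Q.coeff (q_w + (k:ℕ)) = c (Sum.inr (⟨j, hj⟩, k)) := by
          rw [hQ, Polynomial.finset_sum_coeff, Finset.sum_eq_single k]
          · simp [Polynomial.coeff_monomial]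
          · intro k' _ hne
            rw [Polynomial.coeff_monomial, if_neg (fun h => hne (Fin.ext (by omega)))]
          · simp
        rw [hQ0, Polynomial.coeff_zero] at hco
        exact hco.symm
    intro i
    rcases i with i | ⟨j, k⟩
    · exact hmono i
    · have h6 := hknot (j:ℕ) j.2 k
      rwa [Fin.eta] at h6
  -- spanning
  have hsp : ⊤ ≤ Submodule.span ℝ (Set.range b) := by
    rintro ⟨g, hg⟩ -
    obtain ⟨f, hf, hp, hfg⟩ := (hS g).mp hg
    choose p hdeg heval using hp
    set P : ℕ → Polynomial ℝ := fun j => if h : j ≤ n then p j h else 0 with hPdef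
    have hPdeg : ∀ j, j ≤ n → (P j).natDegree ≤ q_w+q_p := by
      intro j hj
      rw [hPdef]
      simp only [dif_pos hj]
      exact hdeg j hj
    have hPeval : ∀ j, j ≤ n → ∀ ξ ∈ Set.Icc ((j:ℝ)) ((j:ℝ)+1), f ξ = (P j).eval ξ := by
      intro j hj ξ hξ
      rw [hPdef]
      simp only [dif_pos hj]
      exact heval j hj ξ hξ
    have hmatch : ∀ j : ℕ, j < n → ∀ i : ℕ, i < q_w →
        (Polynomial.taylor ((j:ℝ)+1) (P (j+1) - P j)).coeff i = 0 := by
      intro j hjn i hi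
      apply SplineAux.taylor_coeff_zero_of_iteratedDeriv
      have hj0 : (0:ℝ) ≤ (j:ℝ) := Nat.cast_nonneg j
      have hj1 : (j:ℝ) + 1 ≤ (n:ℝ) := by exact_mod_cast hjn
      have hL : iteratedDerivWithin i f (Set.Icc (0:ℝ) ((n:ℝ)+1)) ((j:ℝ)+1)
          = (Polynomial.derivative^[i] (P j)).eval ((j:ℝ)+1) :=
        SplineAux.iteratedDerivWithin_eq_poly hTu hf
          (by linarith : (j:ℝ) < (j:ℝ)+1)
          (Set.Icc_subset_Icc hj0 (by linarith))
          (hPeval j (by omega))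
          ⟨by linarith, le_refl _⟩ (by omega)
      have hR : iteratedDerivWithin i f (Set.Icc (0:ℝ) ((n:ℝ)+1)) ((j:ℝ)+1)
          = (Polynomial.derivative^[i] (P (j+1))).eval ((j:ℝ)+1) := by
        have h2 := hPeval (j+1) (by omega)
        rw [show ((j+1:ℕ):ℝ) = (j:ℝ)+1 by push_cast; ring] at h2
        exact SplineAux.iteratedDerivWithin_eq_poly hTu hf
          (by linarith : (j:ℝ)+1 < (j:ℝ)+1+1)
          (Set.Icc_subset_Icc (by linarith) (by linarith))
          h2 ⟨le_refl _, by linarith⟩ (by omega)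
      rw [Polynomial.iterate_derivative_sub, Polynomial.eval_sub, ← hL, ← hR, sub_self]
    rw [Submodule.mem_span_range_iff_exists_fun]
    refine ⟨Sum.elim (fun i => (P 0).coeff (i:ℕ))
        (fun jk => (Polynomial.taylor (((jk.1:ℕ):ℝ)+1)
          (P ((jk.1:ℕ)+1) - P (jk.1:ℕ))).coeff (q_w + (jk.2:ℕ))), ?_⟩
    apply Subtype.ext
    funext z
    set c : (Fin (q_w+q_p+1) ⊕ Fin n × Fin (q_p+1)) → ℝ :=
      Sum.elim (fun i => (P 0).coeff (i:ℕ))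
        (fun jk => (Polynomial.taylor (((jk.1:ℕ):ℝ)+1)
          (P ((jk.1:ℕ)+1) - P (jk.1:ℕ))).coeff (q_w + (jk.2:ℕ))) with hcdef
    rw [show ((∑ i, c i • b i : S) : Set.Icc (0:ℝ) ((n:ℝ)+1) → ℝ) z
      = ∑ i, c i * B i (z:ℝ) from hcoe c z]
    obtain ⟨x, hx⟩ := z
    show ∑ i, c i * B i x = g ⟨x, hx⟩
    rw [hfg ⟨x, hx⟩]
    set m : ℕ := min (Nat.floor x) n with hm
    have hmn : m ≤ n := min_le_right _ _
    have hx0 : (0:ℝ) ≤ x := hx.1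
    have hx1 : (m:ℝ) ≤ x := by
      rcases le_or_gt (Nat.floor x) n with h | h
      · rw [hm, min_eq_left h]
        exact Nat.floor_le hx0
      · rw [hm, min_eq_right h.le]
        have h7 : ((n:ℕ):ℝ) + 1 ≤ (Nat.floor x : ℝ) := by exact_mod_cast h
        have h8 := Nat.floor_le hx0
        linarith
    have hx2 : x ≤ (m:ℝ)+1 := by
      rcases le_or_gt (Nat.floor x) n with h | h
      · rw [hm, min_eq_left h]
        exact (Nat.lt_floor_add_one x).le
      · rw [hm, min_eq_right h.le]
        exact hx.2
    have hfx : f x = (P m).eval x := hPeval m hmn x ⟨hx1, hx2⟩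
    rw [Fintype.sum_sum_type]
    have hpart1 : ∑ i : Fin (q_w+q_p+1), c (Sum.inl i) * B (Sum.inl i) x
        = (P 0).eval x := by
      rw [Polynomial.eval_eq_sum_range'
        (lt_of_le_of_lt (hPdeg 0 (by omega)) (Nat.lt_succ_self (q_w+q_p))) x]
      rw [← Fin.sum_univ_eq_sum_range (fun i => (P 0).coeff i * x ^ i) (q_w+q_p+1)]
      exact Finset.sum_congr rfl fun i _ => by rw [hBinl, hcdef]; rfl
    have hpart2 : ∑ jk : Fin n × Fin (q_p+1), c (Sum.inr jk) * B (Sum.inr jk) x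
        = ∑ j ∈ Finset.range m, ((P (j+1)).eval x - (P j).eval x) := by
      rw [Fintype.sum_prod_type]
      have hterm : ∀ j' : Fin n,
          ∑ k : Fin (q_p+1), c (Sum.inr (j',k)) * B (Sum.inr (j',k)) x
            = if (j':ℕ)+1 ≤ m then (P ((j':ℕ)+1)).eval x - (P (j':ℕ)).eval x else 0 := by
        intro j'
        by_cases hj' : (j':ℕ)+1 ≤ m
        · rw [if_pos hj']
          have hdeg' : (P ((j':ℕ)+1) - P (j':ℕ)).natDegree ≤ q_w + q_p :=
            le_trans (Polynomial.natDegree_sub_le _ _)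
              (max_le (hPdeg _ (by omega)) (hPdeg _ (by omega)))
          have hlow : ∀ i < q_w,
              (Polynomial.taylor (((j':ℕ):ℝ)+1) (P ((j':ℕ)+1) - P (j':ℕ))).coeff i = 0 :=
            fun i hi => hmatch (j':ℕ) j'.2 i hi
          have hE := SplineAux.eval_eq_truncated_sum hdeg' hlow x
          calc ∑ k : Fin (q_p+1), c (Sum.inr (j',k)) * B (Sum.inr (j',k)) x
              = ∑ k ∈ Finset.range (q_p+1),
                  (Polynomial.taylor (((j':ℕ):ℝ)+1)
                    (P ((j':ℕ)+1) - P (j':ℕ))).coeff (q_w+k)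
                    * (x - (((j':ℕ):ℝ)+1))^(q_w+k) := by
                rw [← Fin.sum_univ_eq_sum_range]
                refine Finset.sum_congr rfl fun k _ => ?_
                rw [hsegB m x hx1 hx2 j' k, if_pos hj', hcdef]
                rfl
            _ = (P ((j':ℕ)+1) - P (j':ℕ)).eval x := hE.symm
            _ = (P ((j':ℕ)+1)).eval x - (P (j':ℕ)).eval x := by
                rw [Polynomial.eval_sub]
        · rw [if_neg hj']
          refine Finset.sum_eq_zero fun k _ => ?_
          rw [hsegB m x hx1 hx2 j' k, if_neg hj', mul_zero]
      rw [Finset.sum_congr rfl (fun j' _ => hterm j')]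
      rw [Fin.sum_univ_eq_sum_range
        (fun j => if j+1 ≤ m then (P (j+1)).eval x - (P j).eval x else 0) n]
      rw [← Finset.sum_subset (Finset.range_subset_range.mpr hmn)
        (fun j _ hj => if_neg (by simp only [Finset.mem_range] at hj; omega))]
      exact Finset.sum_congr rfl fun j hj =>
        if_pos (by simp only [Finset.mem_range] at hj; omega)
    rw [hpart1, hpart2, Finset.sum_range_sub (fun j => (P j).eval x), hfx]
    ring
  -- conclusion
  let bas : Module.Basis (Fin (q_w+q_p+1) ⊕ Fin n × Fin (q_p+1)) ℝ S := Module.Basis.mk hli hsp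
  rw [Module.finrank_eq_card_basis bas]
  simp [Fintype.card_sum, Fintype.card_prod, Fintype.card_fin]
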